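/- For every real number r with -1 ≤ r ≤ 1, the first cosine Fourier coefficient of the rectified shifted cosine satisfies (1/π) · ∫_{-π}^{π} max(0, cos t + r) · cos t dt = (1/π)(r·√(1-r²) - arccos r) + 1. -/

import Mathlib

open Real intervalIntegral

/-- Describing-function gain of the rectifier: the first cosine Fourier
coefficient of `t ↦ max 0 (cos t + r)` equals
`(1/π)·(r·√(1-r²) - arccos r) + 1` for `-1 ≤ r ≤ 1`. -/
theorem fourier_cos_coeff_rectified_shifted_cos (r : ℝ)
    (hr : -1 ≤ r) (hr' : r ≤ 1) :
    (1 / π) * ∫ t in (-π)..π, max 0 (Real.cos t + r) * Real.cos t =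
      (1 / π) * (r * Real.sqrt (1 - r ^ 2) - Real.arccos r) + 1 := by
  set θ := Real.arccos (-r) with hθdef
  have h1 : (-1 : ℝ) ≤ -r := by linarith
  have h1' : -r ≤ 1 := by linarith
  have hθ0 : 0 ≤ θ := Real.arccos_nonneg _
  have hθπ : θ ≤ π := Real.arccos_le_pi _
  have hcos : Real.cos θ = -r := Real.cos_arccos h1 h1'
  have hsin : Real.sin θ = Real.sqrt (1 - r ^ 2) := by
    rw [hθdef, Real.sin_arccos]
    congr 1; ring
  have hcont : Continuous fun t => max 0 (Real.cos t + r) * Real.cos t := by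
    fun_prop
  have hint : ∀ a b : ℝ, IntervalIntegrable
      (fun t => max 0 (Real.cos t + r) * Real.cos t) MeasureTheory.volume a b :=
    fun a b => hcont.intervalIntegrable a b
  -- split the integral
  have hsplit : (∫ t in (-π)..π, max 0 (Real.cos t + r) * Real.cos t) =
      (∫ t in (-π)..(-θ), max 0 (Real.cos t + r) * Real.cos t) +
      (∫ t in (-θ)..θ, max 0 (Real.cos t + r) * Real.cos t) +
      (∫ t in θ..π, max 0 (Real.cos t + r) * Real.cos t) := by
    rw [integral_add_adjacent_intervals (hint _ _) (hint _ _),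
      integral_add_adjacent_intervals (hint _ _) (hint _ _)]
  have hle : ∀ t ∈ Set.Icc θ π, Real.cos t + r ≤ 0 := by
    intro t ht
    have : Real.cos t ≤ Real.cos θ :=
      Real.strictAntiOn_cos.antitoneOn ⟨hθ0, hθπ⟩ ⟨le_trans hθ0 ht.1, ht.2⟩ ht.1
    rw [hcos] at this; linarith
  have hright : (∫ t in θ..π, max 0 (Real.cos t + r) * Real.cos t) = 0 := by
    rw [show (0:ℝ) = ∫ t in θ..π, (0:ℝ) by simp]
    apply integral_congr
    intro t ht
    rw [Set.uIcc_of_le hθπ] at ht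
    simp [max_eq_left (hle t ht)]
  have hleft : (∫ t in (-π)..(-θ), max 0 (Real.cos t + r) * Real.cos t) = 0 := by
    rw [show (0:ℝ) = ∫ t in (-π)..(-θ), (0:ℝ) by simp]
    apply integral_congr
    intro t ht
    rw [Set.uIcc_of_le (by linarith)] at ht
    have : Real.cos (-t) + r ≤ 0 := hle (-t) ⟨by linarith [ht.2], by linarith [ht.1]⟩
    rw [Real.cos_neg] at this
    simp [max_eq_left this]
  have hmid : (∫ t in (-θ)..θ, max 0 (Real.cos t + r) * Real.cos t) =
      θ + Real.sin θ * Real.cos θ + 2 * r * Real.sin θ := by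
    have heq : (∫ t in (-θ)..θ, max 0 (Real.cos t + r) * Real.cos t) =
        ∫ t in (-θ)..θ, (Real.cos t ^ 2 + r * Real.cos t) := by
      apply integral_congr
      intro t ht
      rw [Set.uIcc_of_le (by linarith)] at ht
      have habs : |t| ≤ θ := abs_le.mpr ⟨ht.1, ht.2⟩
      have : Real.cos θ ≤ Real.cos |t| :=
        Real.strictAntiOn_cos.antitoneOn ⟨abs_nonneg t, le_trans habs hθπ⟩
          ⟨hθ0, hθπ⟩ habs
      rw [Real.cos_abs, hcos] at this
      have hge : 0 ≤ Real.cos t + r := by linarith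
      simp only [max_eq_right hge]; ring
    rw [heq, integral_add (f := fun t => Real.cos t ^ 2) (g := fun t => r * Real.cos t) ((Real.continuous_cos.pow 2).intervalIntegrable _ _)
      ((continuous_const.mul Real.continuous_cos).intervalIntegrable _ _),
      intervalIntegral.integral_const_mul, integral_cos_sq, integral_cos]
    simp [Real.cos_neg, Real.sin_neg]
    ring
  have harccos : θ = π - Real.arccos r := Real.arccos_neg r
  rw [hsplit, hleft, hright, hmid, hsin, hcos, harccos]
  have hπ : π ≠ 0 := Real.pi_ne_zero
  field_simp
  ring
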